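/- Let c, d ≥ 2 be integers and let f = X₁² + X₂² + X₃^c·X₄ + X₃·X₄^d in the polynomial ring ℂ[X₁, X₂, X₃, X₄]. Then the quotient ring ℂ[X₁, X₂, X₃, X₄]/⟨∂f/∂X₁, ∂f/∂X₂, ∂f/∂X₃, ∂f/∂X₄⟩ is a finite-dimensional ℂ-vector space of dimension c·d. -/

import Mathlib

open MvPolynomial

/-- The Jacobian ideal of a polynomial in four variables: the ideal generated by
its four partial derivatives. -/
noncomputable def jacobianIdeal (f : MvPolynomial (Fin 4) ℂ) : Ideal (MvPolynomial (Fin 4) ℂ) :=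
  Ideal.span {pderiv 0 f, pderiv 1 f, pderiv 2 f, pderiv 3 f}

namespace MilnorLoop

variable (c d : ℕ)

/-- Normal form table for monomials `u^k v^l` in the Milnor algebra. -/
noncomputable def NN (k l : ℕ) : ℕ × ℕ → ℂ :=
  if k < c ∧ l < d then Pi.single (k, l) (1:ℂ)
  else if l = 0 ∧ k < 2*c - 1 then Pi.single (k - c + 1, d - 1) (-(d:ℂ))
  else if k = 0 ∧ l < 2*d - 1 then Pi.single (c - 1, l - d + 1) (-(c:ℂ))
  else 0

/-- The linear functional collecting normal forms. -/
noncomputable def Phi : MvPolynomial (Fin 4) ℂ →ₗ[ℂ] (ℕ × ℕ → ℂ) :=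
  (Finsupp.lsum ℂ fun m : Fin 4 →₀ ℕ =>
    LinearMap.toSpanSingleton ℂ (ℕ × ℕ → ℂ)
      (if m 0 = 0 ∧ m 1 = 0 then NN c d (m 2) (m 3) else 0))
    ∘ₗ (AddMonoidAlgebra.coeffLinearEquiv ℂ).toLinearMap

lemma Phi_monomial (m : Fin 4 →₀ ℕ) (a : ℂ) :
    Phi c d (monomial m a) = a • (if m 0 = 0 ∧ m 1 = 0 then NN c d (m 2) (m 3) else 0) := by
  simp only [Phi, LinearMap.coe_comp, Function.comp_apply, LinearEquiv.coe_coe]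
  exact Finsupp.lsum_single _ _ _ _

lemma single_smul' (a b : ℂ) (p : ℕ × ℕ) :
    a • (Pi.single p b : ℕ × ℕ → ℂ) = Pi.single p (a * b) := by
  ext q
  by_cases h : q = p <;> simp [Pi.single_apply, h]

variable {c d}
variable (hc : 2 ≤ c) (hd : 2 ≤ d)

section NNlemmas
include hc hd

lemma NN_of_lt {k l : ℕ} (h1 : k < c) (h2 : l < d) : NN c d k l = Pi.single (k, l) (1:ℂ) := by
  rw [NN, if_pos ⟨h1, h2⟩]

lemma NN_zero₁ {k l : ℕ} (h1 : c ≤ k) (h2 : 1 ≤ l) : NN c d k l = 0 := by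
  rw [NN, if_neg (by omega), if_neg (by omega), if_neg (by omega)]

lemma NN_zero₂ {k l : ℕ} (h1 : 1 ≤ k) (h2 : d ≤ l) : NN c d k l = 0 := by
  rw [NN, if_neg (by omega), if_neg (by omega), if_neg (by omega)]

lemma relA (k l : ℕ) : (c:ℂ) • NN c d (k + (c-1)) (l+1) + NN c d k (l+d) = 0 := by
  rcases Nat.eq_zero_or_pos k with hk | hk
  · subst hk
    by_cases hl : l + 1 < d
    · rw [show (0:ℕ) + (c-1) = c - 1 by omega]
      rw [NN_of_lt hc hd (by omega) hl]
      rw [show NN c d 0 (l + d) = Pi.single (c-1, l+d-d+1) (-(c:ℂ)) by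
        rw [NN, if_neg (by omega), if_neg (by omega), if_pos ⟨rfl, by omega⟩]]
      rw [show l + d - d + 1 = l + 1 by omega, single_smul']
      ext q
      by_cases h : q = ((c-1 : ℕ), l+1) <;> simp [Pi.single_apply, h]
    · rw [NN_zero₂ hc hd (by omega) (by omega), show NN c d 0 (l+d) = 0 by
        rw [NN, if_neg (by omega), if_neg (by omega), if_neg (by omega)]]
      simp
  · rw [NN_zero₁ hc hd (by omega) (by omega), NN_zero₂ hc hd (by omega) (by omega)]
    simp

lemma relB (k l : ℕ) : NN c d (k + c) l + (d:ℂ) • NN c d (k+1) (l + (d-1)) = 0 := by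
  rcases Nat.eq_zero_or_pos l with hl | hl
  · subst hl
    by_cases hk : k + 1 < c
    · rw [show (0:ℕ) + (d-1) = d - 1 by omega]
      rw [NN_of_lt hc hd hk (by omega)]
      rw [show NN c d (k + c) 0 = Pi.single (k+c-c+1, d-1) (-(d:ℂ)) by
        rw [NN, if_neg (by omega), if_pos ⟨rfl, by omega⟩]]
      rw [show k + c - c + 1 = k + 1 by omega, single_smul']
      ext q
      by_cases h : q = (k+1, (d-1:ℕ)) <;> simp [Pi.single_apply, h]
    · rw [show (0:ℕ) + (d-1) = d - 1 by omega,
        show NN c d (k + c) 0 = 0 by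
          rw [NN, if_neg (by omega), if_neg (by omega), if_neg (by omega)],
        NN_zero₁ hc hd (by omega) (by omega)]
      simp
  · rw [NN_zero₁ hc hd (by omega) (by omega), NN_zero₂ hc hd (by omega) (by omega)]
    simp

end NNlemmas

end MilnorLoop

namespace MilnorLoop

/-- The suspended loop polynomial. -/
noncomputable def F (c d : ℕ) : MvPolynomial (Fin 4) ℂ :=
  X 0 ^ 2 + X 1 ^ 2 + X 2 ^ c * X 3 + X 2 * X 3 ^ d

variable (c d : ℕ)

lemma pd0 : pderiv (0 : Fin 4) (F c d) = C 2 * X 0 := by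
  rw [F]; simp [pderiv_X, pderiv_pow, Pi.single_apply]
  rw [map_ofNat]

lemma pd1 : pderiv (1 : Fin 4) (F c d) = C 2 * X 1 := by
  rw [F]; simp [pderiv_X, pderiv_pow, Pi.single_apply]
  rw [map_ofNat]

lemma pd2 : pderiv (2 : Fin 4) (F c d) = C (c:ℂ) * X 2 ^ (c-1) * X 3 + X 3 ^ d := by
  rw [F]; simp [pderiv_X, pderiv_pow, Pi.single_apply]; ring

lemma pd3 : pderiv (3 : Fin 4) (F c d) = X 2 ^ c + C (d:ℂ) * X 2 * X 3 ^ (d-1) := by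
  rw [F]; simp [pderiv_X, pderiv_pow, Pi.single_apply]; ring

lemma pd0' : pderiv (0 : Fin 4) (F c d) = monomial (Finsupp.single 0 1) (2:ℂ) := by
  rw [pd0, ← C_mul_X_eq_monomial]

lemma pd1' : pderiv (1 : Fin 4) (F c d) = monomial (Finsupp.single 1 1) (2:ℂ) := by
  rw [pd1, ← C_mul_X_eq_monomial]

lemma pd2' : pderiv (2 : Fin 4) (F c d) =
    monomial (Finsupp.single 2 (c-1) + Finsupp.single 3 1) (c:ℂ)
      + monomial (Finsupp.single 3 d) (1:ℂ) := by
  rw [pd2, X_pow_eq_monomial, X_pow_eq_monomial (n := 3) (e := d),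
    show (X 3 : MvPolynomial (Fin 4) ℂ) = monomial (Finsupp.single 3 1) 1 from rfl,
    C_mul_monomial, monomial_mul]
  simp

lemma pd3' : pderiv (3 : Fin 4) (F c d) =
    monomial (Finsupp.single 2 c) (1:ℂ)
      + monomial (Finsupp.single 2 1 + Finsupp.single 3 (d-1)) (d:ℂ) := by
  rw [pd3, X_pow_eq_monomial, X_pow_eq_monomial (n := 3) (e := d-1),
    show (X 2 : MvPolynomial (Fin 4) ℂ) = monomial (Finsupp.single 2 1) 1 from rfl,
    C_mul_monomial, monomial_mul]
  simp

end MilnorLoop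

namespace MilnorLoop

variable {c d : ℕ} (hc : 2 ≤ c) (hd : 2 ≤ d)

lemma Phi_mul_pd0 (p : MvPolynomial (Fin 4) ℂ) :
    Phi c d (p * pderiv (0 : Fin 4) (F c d)) = 0 := by
  induction p using MvPolynomial.induction_on' with
  | add p q hp hq => rw [add_mul, map_add, hp, hq, add_zero]
  | monomial m a =>
    rw [pd0', monomial_mul, Phi_monomial, if_neg]
    · rw [smul_zero]
    · simp [Finsupp.add_apply, Finsupp.single_apply]

lemma Phi_mul_pd1 (p : MvPolynomial (Fin 4) ℂ) :
    Phi c d (p * pderiv (1 : Fin 4) (F c d)) = 0 := by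
  induction p using MvPolynomial.induction_on' with
  | add p q hp hq => rw [add_mul, map_add, hp, hq, add_zero]
  | monomial m a =>
    rw [pd1', monomial_mul, Phi_monomial, if_neg]
    · rw [smul_zero]
    · simp [Finsupp.add_apply, Finsupp.single_apply]

include hc hd in
lemma Phi_mul_pd2 (p : MvPolynomial (Fin 4) ℂ) :
    Phi c d (p * pderiv (2 : Fin 4) (F c d)) = 0 := by
  induction p using MvPolynomial.induction_on' with
  | add p q hp hq => rw [add_mul, map_add, hp, hq, add_zero]
  | monomial m a =>
    rw [pd2', mul_add, monomial_mul, monomial_mul, map_add, Phi_monomial, Phi_monomial]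
    by_cases h : m 0 = 0 ∧ m 1 = 0
    · rw [if_pos, if_pos]
      · have e2 : ((m + (Finsupp.single 2 (c-1) + Finsupp.single 3 1) : Fin 4 →₀ ℕ)) 2 = m 2 + (c-1) := by
          simp [Finsupp.add_apply, Finsupp.single_apply]
        have e3 : ((m + (Finsupp.single 2 (c-1) + Finsupp.single 3 1) : Fin 4 →₀ ℕ)) 3 = m 3 + 1 := by
          simp [Finsupp.add_apply, Finsupp.single_apply]
        have f2 : ((m + Finsupp.single 3 d : Fin 4 →₀ ℕ)) 2 = m 2 := by
          simp [Finsupp.add_apply, Finsupp.single_apply]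
        have f3 : ((m + Finsupp.single 3 d : Fin 4 →₀ ℕ)) 3 = m 3 + d := by
          simp [Finsupp.add_apply, Finsupp.single_apply]
        rw [e2, e3, f2, f3, mul_smul, mul_one, ← smul_add, relA hc hd, smul_zero]
      · constructor <;> simp [Finsupp.add_apply, Finsupp.single_apply, h.1, h.2]
      · constructor <;> simp [Finsupp.add_apply, Finsupp.single_apply, h.1, h.2]
    · rw [if_neg, if_neg]
      · simp
      · simpa [Finsupp.add_apply, Finsupp.single_apply] using h
      · simpa [Finsupp.add_apply, Finsupp.single_apply] using h

include hc hd in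
lemma Phi_mul_pd3 (p : MvPolynomial (Fin 4) ℂ) :
    Phi c d (p * pderiv (3 : Fin 4) (F c d)) = 0 := by
  induction p using MvPolynomial.induction_on' with
  | add p q hp hq => rw [add_mul, map_add, hp, hq, add_zero]
  | monomial m a =>
    rw [pd3', mul_add, monomial_mul, monomial_mul, map_add, Phi_monomial, Phi_monomial]
    by_cases h : m 0 = 0 ∧ m 1 = 0
    · rw [if_pos, if_pos]
      · have e2 : ((m + Finsupp.single 2 c : Fin 4 →₀ ℕ)) 2 = m 2 + c := by
          simp [Finsupp.add_apply, Finsupp.single_apply]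
        have e3 : ((m + Finsupp.single 2 c : Fin 4 →₀ ℕ)) 3 = m 3 := by
          simp [Finsupp.add_apply, Finsupp.single_apply]
        have f2 : ((m + (Finsupp.single 2 1 + Finsupp.single 3 (d-1)) : Fin 4 →₀ ℕ)) 2 = m 2 + 1 := by
          simp [Finsupp.add_apply, Finsupp.single_apply]
        have f3 : ((m + (Finsupp.single 2 1 + Finsupp.single 3 (d-1)) : Fin 4 →₀ ℕ)) 3 = m 3 + (d-1) := by
          simp [Finsupp.add_apply, Finsupp.single_apply]
        rw [e2, e3, f2, f3, mul_one, mul_smul, ← smul_add, relB hc hd, smul_zero]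
      · constructor <;> simp [Finsupp.add_apply, Finsupp.single_apply, h.1, h.2]
      · constructor <;> simp [Finsupp.add_apply, Finsupp.single_apply, h.1, h.2]
    · rw [if_neg, if_neg]
      · simp
      · simpa [Finsupp.add_apply, Finsupp.single_apply] using h
      · simpa [Finsupp.add_apply, Finsupp.single_apply] using h

include hc hd in
lemma Phi_jacobian {x : MvPolynomial (Fin 4) ℂ} (hx : x ∈ jacobianIdeal (F c d)) :
    Phi c d x = 0 := by
  have key : ∀ x ∈ jacobianIdeal (F c d), ∀ p, Phi c d (p * x) = 0 := by
    intro x hx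
    refine Submodule.span_induction (p := fun x _ => ∀ p, Phi c d (p * x) = 0)
      ?_ ?_ ?_ ?_ hx
    · intro g hg
      simp only [Set.mem_insert_iff, Set.mem_singleton_iff] at hg
      rcases hg with h | h | h | h <;> subst h <;> intro p
      · exact Phi_mul_pd0 p
      · exact Phi_mul_pd1 p
      · exact Phi_mul_pd2 hc hd p
      · exact Phi_mul_pd3 hc hd p
    · intro p; rw [mul_zero, map_zero]
    · intro x y _ _ hx hy p; rw [mul_add, map_add, hx, hy, add_zero]
    · intro r x _ hx p; rw [smul_eq_mul, ← mul_assoc, hx]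
  simpa using key x hx 1

end MilnorLoop

namespace MilnorLoop

variable {c d : ℕ} (hc : 2 ≤ c) (hd : 2 ≤ d)

lemma mem_pd0 : pderiv (0 : Fin 4) (F c d) ∈ jacobianIdeal (F c d) :=
  Ideal.subset_span (by simp)

lemma mem_pd2 : pderiv (2 : Fin 4) (F c d) ∈ jacobianIdeal (F c d) :=
  Ideal.subset_span (by simp)

lemma mem_pd3 : pderiv (3 : Fin 4) (F c d) ∈ jacobianIdeal (F c d) :=
  Ideal.subset_span (by simp)

lemma X0_mem : (X 0 : MvPolynomial (Fin 4) ℂ) ∈ jacobianIdeal (F c d) := by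
  have h : (X 0 : MvPolynomial (Fin 4) ℂ) = C (2⁻¹ : ℂ) * pderiv (0 : Fin 4) (F c d) := by
    rw [pd0, ← mul_assoc, ← C_mul]
    norm_num
  rw [h]
  exact Ideal.mul_mem_left _ _ mem_pd0

lemma X1_mem : (X 1 : MvPolynomial (Fin 4) ℂ) ∈ jacobianIdeal (F c d) := by
  have h : (X 1 : MvPolynomial (Fin 4) ℂ) = C (2⁻¹ : ℂ) * pderiv (1 : Fin 4) (F c d) := by
    rw [pd1, ← mul_assoc, ← C_mul]
    norm_num
  rw [h]
  exact Ideal.mul_mem_left _ _ (Ideal.subset_span (by simp))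

include hc hd in
lemma cd_ne : ((c:ℂ) * d - 1) ≠ 0 := by
  have h4 : 4 ≤ c * d := Nat.mul_le_mul hc hd
  have h1 : ((c * d : ℕ) : ℂ) ≠ ((1:ℕ) : ℂ) := by
    exact_mod_cast (by omega : c * d ≠ 1)
  push_cast at h1
  intro h
  exact h1 (sub_eq_zero.mp h)

include hc hd in
lemma hA_mem : (X 2 ^ c * X 3 : MvPolynomial (Fin 4) ℂ) ∈ jacobianIdeal (F c d) := by
  have key : C ((c:ℂ) * d - 1) * (X 2 ^ c * X 3)
      = C (d:ℂ) * X 2 * pderiv (2 : Fin 4) (F c d) - X 3 * pderiv (3 : Fin 4) (F c d) := by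
    rw [pd2, pd3, map_sub, map_mul, map_one]
    obtain ⟨c', rfl⟩ : ∃ c', c = c' + 1 := ⟨c - 1, by omega⟩
    obtain ⟨d', rfl⟩ : ∃ d', d = d' + 1 := ⟨d - 1, by omega⟩
    simp only [Nat.add_sub_cancel]
    ring
  have h : (X 2 ^ c * X 3 : MvPolynomial (Fin 4) ℂ)
      = C (((c:ℂ) * d - 1)⁻¹) *
        (C (d:ℂ) * X 2 * pderiv (2 : Fin 4) (F c d) - X 3 * pderiv (3 : Fin 4) (F c d)) := by
    rw [← key, ← mul_assoc, ← C_mul, inv_mul_cancel₀ (cd_ne hc hd), C_1, one_mul]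
  rw [h]
  exact Ideal.mul_mem_left _ _
    (Ideal.sub_mem _ (Ideal.mul_mem_left _ _ mem_pd2) (Ideal.mul_mem_left _ _ mem_pd3))

include hc hd in
lemma hB_mem : (X 2 * X 3 ^ d : MvPolynomial (Fin 4) ℂ) ∈ jacobianIdeal (F c d) := by
  have key : C ((c:ℂ) * d - 1) * (X 2 * X 3 ^ d)
      = C (c:ℂ) * X 3 * pderiv (3 : Fin 4) (F c d) - X 2 * pderiv (2 : Fin 4) (F c d) := by
    rw [pd2, pd3, map_sub, map_mul, map_one]
    obtain ⟨c', rfl⟩ : ∃ c', c = c' + 1 := ⟨c - 1, by omega⟩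
    obtain ⟨d', rfl⟩ : ∃ d', d = d' + 1 := ⟨d - 1, by omega⟩
    simp only [Nat.add_sub_cancel]
    ring
  have h : (X 2 * X 3 ^ d : MvPolynomial (Fin 4) ℂ)
      = C (((c:ℂ) * d - 1)⁻¹) *
        (C (c:ℂ) * X 3 * pderiv (3 : Fin 4) (F c d) - X 2 * pderiv (2 : Fin 4) (F c d)) := by
    rw [← key, ← mul_assoc, ← C_mul, inv_mul_cancel₀ (cd_ne hc hd), C_1, one_mul]
  rw [h]
  exact Ideal.mul_mem_left _ _
    (Ideal.sub_mem _ (Ideal.mul_mem_left _ _ mem_pd3) (Ideal.mul_mem_left _ _ mem_pd2))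

include hc hd in
lemma prod_zero_mem {k l : ℕ} (hk : 1 ≤ k) (hl : 1 ≤ l) (h : c ≤ k ∨ d ≤ l) :
    (X 2 ^ k * X 3 ^ l : MvPolynomial (Fin 4) ℂ) ∈ jacobianIdeal (F c d) := by
  rcases h with h | h
  · obtain ⟨k', rfl⟩ : ∃ k', k = k' + c := ⟨k - c, by omega⟩
    obtain ⟨l', rfl⟩ : ∃ l', l = l' + 1 := ⟨l - 1, by omega⟩
    have e : (X 2 ^ (k' + c) * X 3 ^ (l' + 1) : MvPolynomial (Fin 4) ℂ)
        = (X 2 ^ k' * X 3 ^ l') * (X 2 ^ c * X 3) := by ring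
    rw [e]
    exact Ideal.mul_mem_left _ _ (hA_mem hc hd)
  · obtain ⟨k', rfl⟩ : ∃ k', k = k' + 1 := ⟨k - 1, by omega⟩
    obtain ⟨l', rfl⟩ : ∃ l', l = l' + d := ⟨l - d, by omega⟩
    have e : (X 2 ^ (k' + 1) * X 3 ^ (l' + d) : MvPolynomial (Fin 4) ℂ)
        = (X 2 ^ k' * X 3 ^ l') * (X 2 * X 3 ^ d) := by ring
    rw [e]
    exact Ideal.mul_mem_left _ _ (hB_mem hc hd)

end MilnorLoop

namespace MilnorLoop

variable (c d : ℕ)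

/-- The candidate basis family in the Milnor algebra. -/
noncomputable def bfam : Fin c × Fin d → (MvPolynomial (Fin 4) ℂ ⧸ jacobianIdeal (F c d)) :=
  fun p => Ideal.Quotient.mkₐ ℂ (jacobianIdeal (F c d)) (X 2 ^ (p.1 : ℕ) * X 3 ^ (p.2 : ℕ))

variable {c d}
variable (hc : 2 ≤ c) (hd : 2 ≤ d)

lemma mka_zero {x : MvPolynomial (Fin 4) ℂ} (hx : x ∈ jacobianIdeal (F c d)) :
    Ideal.Quotient.mkₐ ℂ (jacobianIdeal (F c d)) x = 0 := by
  rw [Ideal.Quotient.mkₐ_eq_mk]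
  exact Ideal.Quotient.eq_zero_iff_mem.2 hx

include hc hd in
lemma mem_span (k l : ℕ) :
    Ideal.Quotient.mkₐ ℂ (jacobianIdeal (F c d)) (X 2 ^ k * X 3 ^ l)
      ∈ Submodule.span ℂ (Set.range (bfam c d)) := by
  by_cases hkc : k < c
  · by_cases hld : l < d
    · exact Submodule.subset_span ⟨(⟨k, hkc⟩, ⟨l, hld⟩), rfl⟩
    · push_neg at hld
      rcases Nat.eq_zero_or_pos k with hk0 | hk1
      · subst hk0
        obtain ⟨t, rfl⟩ : ∃ t, l = t + d := ⟨l - d, by omega⟩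
        have key : (X 3 ^ t * pderiv (2 : Fin 4) (F c d)) =
            C (c:ℂ) * (X 2 ^ (c-1) * X 3 ^ (t+1)) + X 3 ^ (t+d) := by
          rw [pd2]; ring
        have h0 : Ideal.Quotient.mkₐ ℂ (jacobianIdeal (F c d))
            (X 3 ^ t * pderiv (2 : Fin 4) (F c d)) = 0 :=
          mka_zero (Ideal.mul_mem_left _ _ mem_pd2)
        rw [key, map_add, C_mul', map_smul] at h0
        rw [pow_zero, one_mul, eq_neg_of_add_eq_zero_right h0]
        exact neg_mem (Submodule.smul_mem _ _ (by
          by_cases h : c - 1 < c ∧ t + 1 < d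
          · exact Submodule.subset_span ⟨(⟨c-1, h.1⟩, ⟨t+1, h.2⟩), rfl⟩
          · rw [mka_zero (prod_zero_mem hc hd (by omega) (by omega) (by omega))]
            exact zero_mem _))
      · rw [mka_zero (prod_zero_mem hc hd hk1 (by omega) (Or.inr hld))]
        exact zero_mem _
  · push_neg at hkc
    rcases Nat.eq_zero_or_pos l with hl0 | hl1
    · subst hl0
      obtain ⟨t, rfl⟩ : ∃ t, k = t + c := ⟨k - c, by omega⟩
      have key : (X 2 ^ t * pderiv (3 : Fin 4) (F c d)) =
          X 2 ^ (t+c) + C (d:ℂ) * (X 2 ^ (t+1) * X 3 ^ (d-1)) := by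
        rw [pd3]; ring
      have h0 : Ideal.Quotient.mkₐ ℂ (jacobianIdeal (F c d))
          (X 2 ^ t * pderiv (3 : Fin 4) (F c d)) = 0 :=
        mka_zero (Ideal.mul_mem_left _ _ mem_pd3)
      rw [key, map_add, C_mul', map_smul] at h0
      rw [pow_zero, mul_one, eq_neg_of_add_eq_zero_left h0]
      exact neg_mem (Submodule.smul_mem _ _ (by
        by_cases h : t + 1 < c ∧ d - 1 < d
        · exact Submodule.subset_span ⟨(⟨t+1, h.1⟩, ⟨d-1, h.2⟩), rfl⟩
        · rw [mka_zero (prod_zero_mem hc hd (by omega) (by omega) (by omega))]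
          exact zero_mem _))
    · rw [mka_zero (prod_zero_mem hc hd (by omega) hl1 (Or.inl hkc))]
      exact zero_mem _

include hc hd in
lemma span_top : ⊤ ≤ Submodule.span ℂ (Set.range (bfam c d)) := by
  rintro q -
  obtain ⟨p, rfl⟩ := Ideal.Quotient.mkₐ_surjective ℂ (jacobianIdeal (F c d)) q
  induction p using MvPolynomial.induction_on' with
  | add p q hp hq => rw [map_add]; exact add_mem hp hq
  | monomial m a =>
    have hsm : (monomial m a : MvPolynomial (Fin 4) ℂ) = a • monomial m 1 := by
      rw [smul_monomial, smul_eq_mul, mul_one]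
    rw [hsm, map_smul]
    refine Submodule.smul_mem _ _ ?_
    have hm : (monomial m (1:ℂ) : MvPolynomial (Fin 4) ℂ)
        = X 0 ^ (m 0) * X 1 ^ (m 1) * X 2 ^ (m 2) * X 3 ^ (m 3) := by
      rw [monomial_eq, C_1, one_mul, Finsupp.prod_fintype]
      · exact Fin.prod_univ_four _
      · intro i; exact pow_zero _
    rw [hm]
    rcases Nat.eq_zero_or_pos (m 0) with h0 | h0
    · rcases Nat.eq_zero_or_pos (m 1) with h1 | h1
      · rw [h0, h1, pow_zero, pow_zero, one_mul, one_mul]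
        exact mem_span hc hd _ _
      · obtain ⟨t, ht⟩ : ∃ t, m 1 = t + 1 := ⟨m 1 - 1, by omega⟩
        have e : (X 0 ^ (m 0) * X 1 ^ (m 1) * X 2 ^ (m 2) * X 3 ^ (m 3) :
            MvPolynomial (Fin 4) ℂ)
            = (X 0 ^ (m 0) * X 1 ^ t * X 2 ^ (m 2) * X 3 ^ (m 3)) * X 1 := by
          rw [ht]; ring
        rw [e, mka_zero (Ideal.mul_mem_left _ _ X1_mem)]
        exact zero_mem _
    · obtain ⟨t, ht⟩ : ∃ t, m 0 = t + 1 := ⟨m 0 - 1, by omega⟩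
      have e : (X 0 ^ (m 0) * X 1 ^ (m 1) * X 2 ^ (m 2) * X 3 ^ (m 3) :
          MvPolynomial (Fin 4) ℂ)
          = (X 0 ^ t * X 1 ^ (m 1) * X 2 ^ (m 2) * X 3 ^ (m 3)) * X 0 := by
        rw [ht]; ring
      rw [e, mka_zero (Ideal.mul_mem_left _ _ X0_mem)]
      exact zero_mem _

include hc hd in
lemma Phi_basis {i j : ℕ} (hi : i < c) (hj : j < d) :
    Phi c d (X 2 ^ i * X 3 ^ j : MvPolynomial (Fin 4) ℂ) = Pi.single (i, j) (1:ℂ) := by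
  rw [X_pow_eq_monomial, X_pow_eq_monomial, monomial_mul, Phi_monomial]
  rw [show ((Finsupp.single 2 i + Finsupp.single 3 j : Fin 4 →₀ ℕ)) 2 = i by
      simp [Finsupp.single_apply],
    show ((Finsupp.single 2 i + Finsupp.single 3 j : Fin 4 →₀ ℕ)) 3 = j by
      simp [Finsupp.single_apply],
    if_pos ⟨by simp [Finsupp.single_apply], by simp [Finsupp.single_apply]⟩,
    NN_of_lt hc hd hi hj]
  simp

include hc hd in
lemma indep : LinearIndependent ℂ (bfam c d) := by
  rw [Fintype.linearIndependent_iff]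
  intro g hg i
  have hmem : (∑ p : Fin c × Fin d,
      g p • (X 2 ^ (p.1:ℕ) * X 3 ^ (p.2:ℕ) : MvPolynomial (Fin 4) ℂ)) ∈
        jacobianIdeal (F c d) := by
    have h2 : Ideal.Quotient.mkₐ ℂ (jacobianIdeal (F c d)) (∑ p : Fin c × Fin d,
        g p • (X 2 ^ (p.1:ℕ) * X 3 ^ (p.2:ℕ) : MvPolynomial (Fin 4) ℂ)) = 0 := by
      rw [map_sum]
      simp only [map_smul]
      simpa [bfam] using hg
    rw [Ideal.Quotient.mkₐ_eq_mk] at h2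
    exact Ideal.Quotient.eq_zero_iff_mem.1 h2
  have hphi := Phi_jacobian hc hd hmem
  rw [map_sum] at hphi
  have hsum : (∑ p : Fin c × Fin d,
      g p • (Pi.single ((p.1:ℕ), (p.2:ℕ)) (1:ℂ) : ℕ × ℕ → ℂ)) = 0 := by
    calc (∑ p : Fin c × Fin d, g p • (Pi.single ((p.1:ℕ), (p.2:ℕ)) (1:ℂ) : ℕ × ℕ → ℂ))
        = ∑ p : Fin c × Fin d,
            Phi c d (g p • (X 2 ^ (p.1:ℕ) * X 3 ^ (p.2:ℕ) : MvPolynomial (Fin 4) ℂ)) := by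
          refine Finset.sum_congr rfl fun p _ => ?_
          rw [map_smul, Phi_basis hc hd p.1.isLt p.2.isLt]
      _ = 0 := hphi
  have hval : (∑ p : Fin c × Fin d,
      g p • (Pi.single ((p.1:ℕ), (p.2:ℕ)) (1:ℂ) : ℕ × ℕ → ℂ)) ((i.1:ℕ), (i.2:ℕ)) = g i := by
    rw [Finset.sum_apply]
    rw [Finset.sum_eq_single i]
    · simp [Pi.single_apply]
    · intro p _ hpi
      have hne : ((i.1:ℕ), (i.2:ℕ)) ≠ ((p.1:ℕ), (p.2:ℕ)) := by
        intro hEq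
        apply hpi
        rw [Prod.ext_iff] at hEq ⊢
        exact ⟨Fin.val_injective hEq.1.symm, Fin.val_injective hEq.2.symm⟩
      rw [Pi.smul_apply, Pi.single_apply, if_neg hne, smul_zero]
    · intro h; exact absurd (Finset.mem_univ i) h
  rw [hsum] at hval
  simpa using hval.symm

end MilnorLoop

/-- The Milnor number of the suspended loop-type singularity
`x₁² + x₂² + x₃^c x₄ + x₃ x₄^d` is `c·d`. -/
theorem milnor_number_loop (c d : ℕ) (hc : 2 ≤ c) (hd : 2 ≤ d) :
    FiniteDimensional ℂ
      (MvPolynomial (Fin 4) ℂ ⧸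
        jacobianIdeal (X 0 ^ 2 + X 1 ^ 2 + X 2 ^ c * X 3 + X 2 * X 3 ^ d)) ∧
    Module.finrank ℂ
      (MvPolynomial (Fin 4) ℂ ⧸
        jacobianIdeal (X 0 ^ 2 + X 1 ^ 2 + X 2 ^ c * X 3 + X 2 * X 3 ^ d)) = c * d := by
  rw [show (X 0 ^ 2 + X 1 ^ 2 + X 2 ^ c * X 3 + X 2 * X 3 ^ d : MvPolynomial (Fin 4) ℂ)
      = MilnorLoop.F c d from rfl]
  have B : Module.Basis (Fin c × Fin d) ℂ
      (MvPolynomial (Fin 4) ℂ ⧸ jacobianIdeal (MilnorLoop.F c d)) :=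
    Module.Basis.mk (MilnorLoop.indep hc hd) (MilnorLoop.span_top hc hd)
  refine ⟨Module.Finite.of_basis B, ?_⟩
  rw [Module.finrank_eq_card_basis B, Fintype.card_prod, Fintype.card_fin, Fintype.card_fin]
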